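/- Let D be an integral domain with quotient field K, A a D-torsion-free D-algebra, and a ∈ A such that there exists a D-algebra homomorphism φ : Int(D) → A with φ(X) = a. Then the image of φ is a WPC D-subalgebra of A, and in particular f(a) ∈ A and g(f(a)) ∈ A for all f, g ∈ Int(D). -/

import Mathlib

set_option linter.unusedSectionVars false
open Polynomial TensorProduct

variable (D K : Type*) [CommRing D] [IsDomain D] [Field K] [Algebra D K] [IsFractionRing D K]

/-- The ring of integer-valued polynomials `Int(D) ⊆ K[X]`. -/
noncomputable def IntD : Subalgebra D (Polynomial K) :=
  ⨅ a : D, Subalgebra.comap ((Polynomial.aeval (algebraMap D K a)).restrictScalars D)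
    (Algebra.ofId D K).range

theorem mem_IntD {f : Polynomial K} :
    f ∈ IntD D K ↔
      ∀ a : D, ∃ d : D, algebraMap D K d = Polynomial.eval (algebraMap D K a) f := by
  simp [IntD, Algebra.mem_iInf, Subalgebra.mem_comap, Algebra.ofId_apply, Algebra.mem_bot,
    Set.mem_range]

/-- `X` as an element of `Int(D)`. -/
noncomputable def Xint : IntD D K := ⟨Polynomial.X, (mem_IntD D K).mpr fun a => ⟨a, by simp⟩⟩

/-- A `D`-subalgebra `S` of a `D`-torsion-free `D`-algebra `A` is WPC if `f(S) ⊆ S`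
for every integer-valued polynomial `f`, evaluation taking place in `K ⊗[D] A`. -/
def WPCsubA (A : Type*) [CommRing A] [Algebra D A] (S : Subalgebra D A) : Prop :=
  ∀ f ∈ IntD D K, ∀ b ∈ S, ∃ c ∈ S,
    Polynomial.aeval ((1 : K) ⊗ₜ[D] b) f = (1 : K) ⊗ₜ[D] c

/-- `Int(D)` is closed under composition. -/
theorem comp_mem_IntD {f g : K[X]} (hf : f ∈ IntD D K) (hg : g ∈ IntD D K) :
    f.comp g ∈ IntD D K := by
  rw [mem_IntD] at *
  intro a
  obtain ⟨d₁, hd₁⟩ := hg a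
  obtain ⟨d₂, hd₂⟩ := hf d₁
  exact ⟨d₂, by rw [Polynomial.eval_comp, ← hd₁, hd₂]⟩

/-- The key lemma: the image of `f` under `φ`, viewed in `K ⊗[D] A`, is the evaluation
of `f` at `1 ⊗ a`. -/
theorem key (A : Type*) [CommRing A] [Algebra D A] (a : A)
    (φ : IntD D K →ₐ[D] A) (hφ : φ (Xint D K) = a) (f : IntD D K) :
    (1 : K) ⊗ₜ[D] φ f = Polynomial.aeval ((1 : K) ⊗ₜ[D] a) (f : K[X]) := by
  obtain ⟨⟨d, hd⟩, hb⟩ := IsLocalization.integerNormalization_map_to_map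
    (nonZeroDivisors D) (f : K[X])
  set p := IsLocalization.integerNormalization (nonZeroDivisors D) (f : K[X]) with hp
  have hmap : p.map (algebraMap D K) = d • (f : K[X]) := hb
  have haevalX : Polynomial.aeval (Polynomial.X : K[X]) p = p.map (algebraMap D K) :=
    (Polynomial.aeval_map_algebraMap (R := D) (A := K) (B := K[X]) Polynomial.X p).symm.trans
      (Polynomial.aeval_X_left_apply _)
  -- d • f = aeval Xint p in IntD
  have h1 : d • f = Polynomial.aeval (Xint D K) p := by
    apply Subtype.ext
    have h2 : ((Polynomial.aeval (Xint D K) p : IntD D K) : K[X])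
        = Polynomial.aeval (Polynomial.X : K[X]) p :=
      (Polynomial.aeval_algHom_apply (IntD D K).val (Xint D K) p).symm
    rw [h2, haevalX, hmap]
    rfl
  -- main computation
  have incl : ∀ x : A, (1 : K) ⊗ₜ[D] x
      = Algebra.TensorProduct.includeRight (R := D) (A := K) x := fun x => rfl
  have h3 : (1 : K) ⊗ₜ[D] φ (Polynomial.aeval (Xint D K) p)
      = Polynomial.aeval ((1 : K) ⊗ₜ[D] a) (((Polynomial.aeval (Xint D K) p : IntD D K)) : K[X]) := by
    have lhs1 : φ (Polynomial.aeval (Xint D K) p) = Polynomial.aeval a p := by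
      rw [← hφ]; exact (Polynomial.aeval_algHom_apply φ (Xint D K) p).symm
    have lhs2 : (1 : K) ⊗ₜ[D] (Polynomial.aeval a p : A)
        = Polynomial.aeval ((1 : K) ⊗ₜ[D] a) p := by
      rw [incl, incl]
      exact (Polynomial.aeval_algHom_apply
        (Algebra.TensorProduct.includeRight (R := D) (A := K) (B := A)) a p).symm
    have rhs1 : ((Polynomial.aeval (Xint D K) p : IntD D K) : K[X])
        = p.map (algebraMap D K) := by
      rw [← haevalX]
      exact (Polynomial.aeval_algHom_apply (IntD D K).val (Xint D K) p).symm
    rw [lhs1, lhs2, rhs1, Polynomial.aeval_map_algebraMap]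
  rw [← h1] at h3
  -- now h3 : 1 ⊗ φ (d • f) = aeval (1⊗a) ((d•f : IntD) : K[X])
  have hsmul : ((d • f : IntD D K) : K[X]) = d • (f : K[X]) := rfl
  rw [map_smul, hsmul] at h3
  have e1 : d • ((1 : K) ⊗ₜ[D] φ f) = algebraMap D K d • ((1 : K) ⊗ₜ[D] φ f) :=
    (algebraMap_smul K d _).symm
  have e2 : d • (f : K[X]) = algebraMap D K d • (f : K[X]) :=
    (algebraMap_smul K d _).symm
  rw [TensorProduct.tmul_smul, e1, e2,
    map_smul (Polynomial.aeval ((1 : K) ⊗ₜ[D] a)) (algebraMap D K d) (f : K[X])] at h3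
  have hdne : algebraMap D K d ≠ 0 := by
    simpa using (IsFractionRing.to_map_eq_zero_iff (K := K)).not.mpr
      (nonZeroDivisors.ne_zero hd)
  exact smul_right_injective (K ⊗[D] A) hdne h3

theorem stmt_10 (A : Type*) [CommRing A] [Algebra D A] [NoZeroSMulDivisors D A] (a : A)
    (φ : IntD D K →ₐ[D] A) (hφ : φ (Xint D K) = a) :
    WPCsubA D K A φ.range ∧
      ∀ f ∈ IntD D K, ∀ g ∈ IntD D K, ∃ b c : A,
        (1 : K) ⊗ₜ[D] b = Polynomial.aeval ((1 : K) ⊗ₜ[D] a) f ∧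
        (1 : K) ⊗ₜ[D] c = Polynomial.aeval ((1 : K) ⊗ₜ[D] b) g := by
  constructor
  · intro f hf b hb
    obtain ⟨g, hg⟩ := hb
    have hg' : φ g = b := hg
    refine ⟨φ ⟨f.comp (g : K[X]), comp_mem_IntD D K hf g.2⟩, ⟨_, rfl⟩, ?_⟩
    rw [key D K A a φ hφ, ← hg', key D K A a φ hφ]
    exact (Polynomial.aeval_comp _).symm
  · intro f hf g hg
    refine ⟨φ ⟨f, hf⟩, φ ⟨g.comp f, comp_mem_IntD D K hg hf⟩,
      (key D K A a φ hφ ⟨f, hf⟩), ?_⟩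
    rw [key D K A a φ hφ, key D K A a φ hφ]
    exact Polynomial.aeval_comp _
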